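/- Let (M,g,J,ω,Ω⁺) be a strict nearly Kähler 6-manifold with Ric = 5g, so that ∇_X Ω⁺ = -X♭ ∧ ω and ∇ω = Ω⁺. Let η be a harmonic 3-form (hence a section of Λ³_{12}, pointwise orthogonal to Ω⁺, Ω⁻, and to all forms α∧ω). Then the symmetric 2-tensor h_η(X,Y) = Σ_{i,j}(η(X,e_i,e_j)Ω⁺(Y,e_i,e_j) + η(Y,e_i,e_j)Ω⁺(X,e_i,e_j)) is divergence-free. -/
import Mathlib


open RealInnerProductSpace

/-- The covariant derivative `∇_u Ω⁺ = -u♭ ∧ ω` of the real 3-form `Ω⁺` on a strict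
nearly Kähler 6-manifold with `Ric = 5g`, evaluated on `(x,y,z)`:
`(∇_u Ω⁺)(x,y,z) = -(g(u,x)ω(y,z) - g(u,y)ω(x,z) + g(u,z)ω(x,y))`,
with `ω(a,b) = g(Ja,b)`. -/
def DOm {V : Type} [NormedAddCommGroup V] [InnerProductSpace ℝ V]
    (J : V →ₗ[ℝ] V) (u x y z : V) : ℝ :=
  -(⟪u, x⟫ * ⟪J y, z⟫ - ⟪u, y⟫ * ⟪J x, z⟫ + ⟪u, z⟫ * ⟪J x, y⟫)

section
variable {V : Type} [NormedAddCommGroup V] [InnerProductSpace ℝ V]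
  (b : OrthonormalBasis (Fin 6) ℝ V)

lemma collapse (f : V →ₗ[ℝ] ℝ) (v : V) :
    ∑ i : Fin 6, ⟪v, b i⟫ * f (b i) = f v := by
  conv_rhs => rw [← b.sum_repr v]
  rw [map_sum]
  refine Finset.sum_congr rfl fun i _ => ?_
  rw [map_smul, smul_eq_mul, b.repr_apply_apply, real_inner_comm]

lemma collapse3a (T : V →ₗ[ℝ] V →ₗ[ℝ] V →ₗ[ℝ] ℝ) (v x y : V) :
    ∑ i : Fin 6, ⟪v, b i⟫ * T (b i) x y = T v x y := by
  simpa using collapse b ((T.flip x).flip y) v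

lemma collapse3b (T : V →ₗ[ℝ] V →ₗ[ℝ] V →ₗ[ℝ] ℝ) (v x y : V) :
    ∑ i : Fin 6, ⟪v, b i⟫ * T x (b i) y = T x v y := by
  simpa using collapse b ((T x).flip y) v

lemma collapse3c (T : V →ₗ[ℝ] V →ₗ[ℝ] V →ₗ[ℝ] ℝ) (v x y : V) :
    ∑ i : Fin 6, ⟪v, b i⟫ * T x y (b i) = T x y v :=
  collapse b (T x y) v

lemma collapseω (J : V →ₗ[ℝ] V) (v y : V) :
    ∑ i : Fin 6, ⟪v, b i⟫ * ⟪J (b i), y⟫ = ⟪J v, y⟫ := by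
  have := collapse b (((innerSL ℝ y).toLinearMap).comp J) v
  simp only [LinearMap.coe_comp, Function.comp_apply, ContinuousLinearMap.coe_coe,
    innerSL_apply_apply] at this
  calc ∑ i : Fin 6, ⟪v, b i⟫ * ⟪J (b i), y⟫
      = ∑ i : Fin 6, ⟪v, b i⟫ * ⟪y, J (b i)⟫ := by
        refine Finset.sum_congr rfl fun i _ => ?_; rw [real_inner_comm (J (b i)) y]
    _ = ⟪y, J v⟫ := this
    _ = ⟪J v, y⟫ := real_inner_comm _ _

lemma sum_rot (f : Fin 6 → Fin 6 → Fin 6 → ℝ) :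
    (∑ i : Fin 6, ∑ p : Fin 6, ∑ q : Fin 6, f i p q)
      = ∑ p : Fin 6, ∑ q : Fin 6, ∑ i : Fin 6, f i p q := by
  rw [Finset.sum_comm]
  exact Finset.sum_congr rfl fun _ _ => Finset.sum_comm

lemma sum_swap13 (f : Fin 6 → Fin 6 → Fin 6 → ℝ) :
    (∑ i : Fin 6, ∑ p : Fin 6, ∑ q : Fin 6, f i p q)
      = ∑ q : Fin 6, ∑ p : Fin 6, ∑ i : Fin 6, f i p q := by
  rw [sum_rot]; exact Finset.sum_comm

end

set_option maxHeartbeats 1000000 in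
/-- On a strict nearly Kähler 6-manifold `(M,g,J,ω,Ω⁺)` with `Ric = 5g`
(so `∇_X Ω⁺ = -X♭ ∧ ω` and `∇ω = Ω⁺`), the symmetric 2-tensor
`h_η(X,Y) = Σ_{i,j}(η(X,e_i,e_j)Ω⁺(Y,e_i,e_j) + η(Y,e_i,e_j)Ω⁺(X,e_i,e_j))`
associated to a harmonic 3-form `η` (a section of `Λ³₁₂`, pointwise orthogonal to
`Ω⁺`, `Ω⁻` and to all forms `α ∧ ω`) is divergence-free.

Pointwise formalization at an arbitrary point in a normal orthonormal frame `b`: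
`η` and `Ω` are the values of the harmonic 3-form and of `Ω⁺`, `Dη` is the covariant
derivative of `η` (direction first).  The hypotheses encode antisymmetry, `δη = 0`,
`dη = 0`, pointwise orthogonality `Σ_{p,q} η(u,e_p,e_q)ω(e_p,e_q) = 0` (to `Λ³₆`),
pointwise orthogonality `⟨η, Ω⁺⟩ = 0`, and the covariant derivative of the latter
identity.  The conclusion is `(δ h_η)(v) = -Σ_i (∇_{e_i} h_η)(e_i, v) = 0`. -/
theorem stmt17 {V : Type} [NormedAddCommGroup V] [InnerProductSpace ℝ V]
    (b : OrthonormalBasis (Fin 6) ℝ V)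
    (J : V →ₗ[ℝ] V)
    (hJ2 : ∀ x : V, J (J x) = -x)
    (hJg : ∀ x y : V, ⟪J x, J y⟫ = ⟪x, y⟫)
    (η Ω : V →ₗ[ℝ] V →ₗ[ℝ] V →ₗ[ℝ] ℝ)
    (Dη : V →ₗ[ℝ] V →ₗ[ℝ] V →ₗ[ℝ] V →ₗ[ℝ] ℝ)
    (hη12 : ∀ x y z : V, η x y z = -η y x z)
    (hη23 : ∀ x y z : V, η x y z = -η x z y)
    (hΩ12 : ∀ x y z : V, Ω x y z = -Ω y x z)
    (hΩ23 : ∀ x y z : V, Ω x y z = -Ω x z y)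
    (hΩJ : ∀ x y z : V, Ω x (J y) (J z) = -Ω x y z)
    (hDη12 : ∀ u x y z : V, Dη u x y z = -Dη u y x z)
    (hDη23 : ∀ u x y z : V, Dη u x y z = -Dη u x z y)
    (hδη : ∀ y z : V, ∑ i : Fin 6, Dη (b i) (b i) y z = 0)
    (hdη : ∀ x y z w : V,
      Dη x y z w - Dη y x z w + Dη z x y w - Dη w x y z = 0)
    (hηω : ∀ u : V,
      ∑ p : Fin 6, ∑ q : Fin 6, η u (b p) (b q) * ⟪J (b p), b q⟫ = 0)
    (hηΩ : ∑ i : Fin 6, ∑ p : Fin 6, ∑ q : Fin 6,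
      η (b i) (b p) (b q) * Ω (b i) (b p) (b q) = 0)
    (hDηΩ : ∀ u : V,
      ∑ i : Fin 6, ∑ p : Fin 6, ∑ q : Fin 6,
        (Dη u (b i) (b p) (b q) * Ω (b i) (b p) (b q)
          + η (b i) (b p) (b q) * DOm J u (b i) (b p) (b q)) = 0) :
    ∀ v : V,
      ∑ i : Fin 6, ∑ p : Fin 6, ∑ q : Fin 6,
        (Dη (b i) (b i) (b p) (b q) * Ω v (b p) (b q)
          + η (b i) (b p) (b q) * DOm J (b i) v (b p) (b q)
          + Dη (b i) v (b p) (b q) * Ω (b i) (b p) (b q)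
          + η v (b p) (b q) * DOm J (b i) (b i) (b p) (b q)) = 0 := by
  intro v
  have ηxx : ∀ x z : V, η x x z = 0 := by
    intro x z; have := hη12 x x z; linarith
  have ηxyx : ∀ x y : V, η x y x = 0 := by
    intro x y
    have h1 := hη23 x y x
    have h2 := ηxx x y
    linarith
  have ωanti : ∀ x y : V, ⟪J x, y⟫ = -⟪J y, x⟫ := by
    intro x y
    have h1 : ⟪J x, y⟫ = ⟪J (J x), J y⟫ := (hJg (J x) y).symm
    rw [hJ2, inner_neg_left] at h1
    rw [h1, real_inner_comm]
  have onb : ∀ i j : Fin 6, ⟪b i, b j⟫ = if i = j then (1:ℝ) else 0 :=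
    orthonormal_iff_ite.mp b.orthonormal
  -- ### S1
  have hS1 : (∑ i : Fin 6, ∑ p : Fin 6, ∑ q : Fin 6,
      Dη (b i) (b i) (b p) (b q) * Ω v (b p) (b q)) = 0 := by
    rw [sum_rot]
    refine Finset.sum_eq_zero fun p _ => Finset.sum_eq_zero fun q _ => ?_
    rw [← Finset.sum_mul, hδη, zero_mul]
  -- ### S4
  have hsum4 : ∀ p q : Fin 6,
      (∑ i : Fin 6, DOm J (b i) (b i) (b p) (b q)) = -4 * ⟪J (b p), b q⟫ := by
    intro p q
    have h1 : ∑ i : Fin 6, ⟪b i, b i⟫ = (6:ℝ) := by simp [onb]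
    have h2 : ∑ i : Fin 6, ⟪b i, b p⟫ * ⟪J (b i), b q⟫ = ⟪J (b p), b q⟫ := by
      have := collapseω b J (b p) (b q)
      calc ∑ i : Fin 6, ⟪b i, b p⟫ * ⟪J (b i), b q⟫
          = ∑ i : Fin 6, ⟪b p, b i⟫ * ⟪J (b i), b q⟫ := by
            refine Finset.sum_congr rfl fun i _ => ?_
            rw [real_inner_comm (b i) (b p)]
        _ = ⟪J (b p), b q⟫ := this
    have h3 : ∑ i : Fin 6, ⟪b i, b q⟫ * ⟪J (b i), b p⟫ = ⟪J (b q), b p⟫ := by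
      have := collapseω b J (b q) (b p)
      calc ∑ i : Fin 6, ⟪b i, b q⟫ * ⟪J (b i), b p⟫
          = ∑ i : Fin 6, ⟪b q, b i⟫ * ⟪J (b i), b p⟫ := by
            refine Finset.sum_congr rfl fun i _ => ?_
            rw [real_inner_comm (b i) (b q)]
        _ = ⟪J (b q), b p⟫ := this
    have h4 : ⟪J (b q), b p⟫ = -⟪J (b p), b q⟫ := ωanti _ _
    calc (∑ i : Fin 6, DOm J (b i) (b i) (b p) (b q))
        = ∑ i : Fin 6, (-(⟪b i, b i⟫ * ⟪J (b p), b q⟫)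
            + ⟪b i, b p⟫ * ⟪J (b i), b q⟫ + -(⟪b i, b q⟫ * ⟪J (b i), b p⟫)) := by
          refine Finset.sum_congr rfl fun i _ => ?_
          simp only [DOm]; ring
      _ = -((∑ i : Fin 6, ⟪b i, b i⟫) * ⟪J (b p), b q⟫)
            + (∑ i : Fin 6, ⟪b i, b p⟫ * ⟪J (b i), b q⟫)
            + -(∑ i : Fin 6, ⟪b i, b q⟫ * ⟪J (b i), b p⟫) := by
          rw [Finset.sum_add_distrib, Finset.sum_add_distrib, Finset.sum_neg_distrib,
            Finset.sum_neg_distrib, Finset.sum_mul]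
      _ = -4 * ⟪J (b p), b q⟫ := by rw [h1, h2, h3, h4]; ring
  have hS4 : (∑ i : Fin 6, ∑ p : Fin 6, ∑ q : Fin 6,
      η v (b p) (b q) * DOm J (b i) (b i) (b p) (b q)) = 0 := by
    rw [sum_rot]
    calc (∑ p : Fin 6, ∑ q : Fin 6, ∑ i : Fin 6,
          η v (b p) (b q) * DOm J (b i) (b i) (b p) (b q))
        = ∑ p : Fin 6, ∑ q : Fin 6,
            (-4) * (η v (b p) (b q) * ⟪J (b p), b q⟫) := by
          refine Finset.sum_congr rfl fun p _ => Finset.sum_congr rfl fun q _ => ?_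
          rw [← Finset.mul_sum, hsum4]; ring
      _ = (-4) * ∑ p : Fin 6, ∑ q : Fin 6, η v (b p) (b q) * ⟪J (b p), b q⟫ := by
          rw [Finset.mul_sum]
          exact Finset.sum_congr rfl fun p _ => (Finset.mul_sum _ _ _).symm
      _ = 0 := by rw [hηω v, mul_zero]
  -- ### S2
  have hS2 : (∑ i : Fin 6, ∑ p : Fin 6, ∑ q : Fin 6,
      η (b i) (b p) (b q) * DOm J (b i) v (b p) (b q)) = 0 := by
    have e1 : ∀ i p q : Fin 6, η (b i) (b p) (b q) * DOm J (b i) v (b p) (b q)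
        = -(⟪v, b i⟫ * (η (b i) (b p) (b q) * ⟪J (b p), b q⟫))
          + ((⟪b p, b i⟫ * η (b i) (b p) (b q)) * ⟪J v, b q⟫
            - (⟪b q, b i⟫ * η (b i) (b p) (b q)) * ⟪J v, b p⟫) := by
      intro i p q
      simp only [DOm]
      rw [real_inner_comm (b i) v, real_inner_comm (b i) (b p),
        real_inner_comm (b i) (b q)]
      ring
    calc (∑ i : Fin 6, ∑ p : Fin 6, ∑ q : Fin 6,
          η (b i) (b p) (b q) * DOm J (b i) v (b p) (b q))
        = ∑ i : Fin 6, ∑ p : Fin 6, ∑ q : Fin 6,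
            (-(⟪v, b i⟫ * (η (b i) (b p) (b q) * ⟪J (b p), b q⟫))
              + ((⟪b p, b i⟫ * η (b i) (b p) (b q)) * ⟪J v, b q⟫
                - (⟪b q, b i⟫ * η (b i) (b p) (b q)) * ⟪J v, b p⟫)) := by
          exact Finset.sum_congr rfl fun i _ => Finset.sum_congr rfl fun p _ =>
            Finset.sum_congr rfl fun q _ => e1 i p q
      _ = -(∑ i : Fin 6, ∑ p : Fin 6, ∑ q : Fin 6,
              ⟪v, b i⟫ * (η (b i) (b p) (b q) * ⟪J (b p), b q⟫))
          + ((∑ i : Fin 6, ∑ p : Fin 6, ∑ q : Fin 6,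
              (⟪b p, b i⟫ * η (b i) (b p) (b q)) * ⟪J v, b q⟫)
            - (∑ i : Fin 6, ∑ p : Fin 6, ∑ q : Fin 6,
              (⟪b q, b i⟫ * η (b i) (b p) (b q)) * ⟪J v, b p⟫)) := by
          simp only [Finset.sum_add_distrib, Finset.sum_sub_distrib,
            Finset.sum_neg_distrib]
      _ = 0 := by
          have hA : (∑ i : Fin 6, ∑ p : Fin 6, ∑ q : Fin 6,
              ⟪v, b i⟫ * (η (b i) (b p) (b q) * ⟪J (b p), b q⟫)) = 0 := by
            refine Finset.sum_eq_zero fun i _ => ?_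
            calc (∑ p : Fin 6, ∑ q : Fin 6,
                  ⟪v, b i⟫ * (η (b i) (b p) (b q) * ⟪J (b p), b q⟫))
                = ⟪v, b i⟫ * ∑ p : Fin 6, ∑ q : Fin 6,
                    η (b i) (b p) (b q) * ⟪J (b p), b q⟫ := by
                  rw [Finset.mul_sum]
                  exact Finset.sum_congr rfl fun p _ => (Finset.mul_sum _ _ _).symm
              _ = 0 := by rw [hηω (b i), mul_zero]
          have hB : (∑ i : Fin 6, ∑ p : Fin 6, ∑ q : Fin 6,
              (⟪b p, b i⟫ * η (b i) (b p) (b q)) * ⟪J v, b q⟫) = 0 := by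
            rw [sum_rot]
            refine Finset.sum_eq_zero fun p _ => Finset.sum_eq_zero fun q _ => ?_
            rw [← Finset.sum_mul, collapse3a b η (b p) (b p) (b q), ηxx, zero_mul]
          have hC : (∑ i : Fin 6, ∑ p : Fin 6, ∑ q : Fin 6,
              (⟪b q, b i⟫ * η (b i) (b p) (b q)) * ⟪J v, b p⟫) = 0 := by
            rw [sum_rot]
            refine Finset.sum_eq_zero fun p _ => Finset.sum_eq_zero fun q _ => ?_
            rw [← Finset.sum_mul, collapse3a b η (b q) (b p) (b q), ηxyx, zero_mul]
          rw [hA, hB, hC]; ring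
  -- ### S3
  have hSa : (∑ i : Fin 6, ∑ p : Fin 6, ∑ q : Fin 6,
      Dη v (b i) (b p) (b q) * Ω (b i) (b p) (b q)) = 0 := by
    have h := hDηΩ v
    have hz : (∑ i : Fin 6, ∑ p : Fin 6, ∑ q : Fin 6,
        η (b i) (b p) (b q) * DOm J v (b i) (b p) (b q)) = 0 := by
      have e1 : ∀ i p q : Fin 6, η (b i) (b p) (b q) * DOm J v (b i) (b p) (b q)
          = -(⟪v, b i⟫ * (η (b i) (b p) (b q) * ⟪J (b p), b q⟫))
            + ((⟪v, b p⟫ * (η (b i) (b p) (b q) * ⟪J (b i), b q⟫))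
              - (⟪v, b q⟫ * (η (b i) (b p) (b q) * ⟪J (b i), b p⟫))) := by
        intro i p q; simp only [DOm]; ring
      calc (∑ i : Fin 6, ∑ p : Fin 6, ∑ q : Fin 6,
            η (b i) (b p) (b q) * DOm J v (b i) (b p) (b q))
          = ∑ i : Fin 6, ∑ p : Fin 6, ∑ q : Fin 6,
              (-(⟪v, b i⟫ * (η (b i) (b p) (b q) * ⟪J (b p), b q⟫))
                + ((⟪v, b p⟫ * (η (b i) (b p) (b q) * ⟪J (b i), b q⟫))
                  - (⟪v, b q⟫ * (η (b i) (b p) (b q) * ⟪J (b i), b p⟫)))) :=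
            Finset.sum_congr rfl fun i _ => Finset.sum_congr rfl fun p _ =>
              Finset.sum_congr rfl fun q _ => e1 i p q
        _ = -(∑ i : Fin 6, ∑ p : Fin 6, ∑ q : Fin 6,
                ⟪v, b i⟫ * (η (b i) (b p) (b q) * ⟪J (b p), b q⟫))
            + ((∑ i : Fin 6, ∑ p : Fin 6, ∑ q : Fin 6,
                ⟪v, b p⟫ * (η (b i) (b p) (b q) * ⟪J (b i), b q⟫))
              - (∑ i : Fin 6, ∑ p : Fin 6, ∑ q : Fin 6,
                ⟪v, b q⟫ * (η (b i) (b p) (b q) * ⟪J (b i), b p⟫))) := by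
            simp only [Finset.sum_add_distrib, Finset.sum_sub_distrib,
              Finset.sum_neg_distrib]
        _ = 0 := by
            have hA : (∑ i : Fin 6, ∑ p : Fin 6, ∑ q : Fin 6,
                ⟪v, b i⟫ * (η (b i) (b p) (b q) * ⟪J (b p), b q⟫)) = 0 := by
              refine Finset.sum_eq_zero fun i _ => ?_
              calc (∑ p : Fin 6, ∑ q : Fin 6,
                    ⟪v, b i⟫ * (η (b i) (b p) (b q) * ⟪J (b p), b q⟫))
                  = ⟪v, b i⟫ * ∑ p : Fin 6, ∑ q : Fin 6,
                      η (b i) (b p) (b q) * ⟪J (b p), b q⟫ := by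
                    rw [Finset.mul_sum]
                    exact Finset.sum_congr rfl fun p _ => (Finset.mul_sum _ _ _).symm
                _ = 0 := by rw [hηω (b i), mul_zero]
            have hB : (∑ i : Fin 6, ∑ p : Fin 6, ∑ q : Fin 6,
                ⟪v, b p⟫ * (η (b i) (b p) (b q) * ⟪J (b i), b q⟫)) = 0 := by
              have swap : ∀ i : Fin 6,
                  (∑ p : Fin 6, ∑ q : Fin 6,
                    ⟪v, b p⟫ * (η (b i) (b p) (b q) * ⟪J (b i), b q⟫))
                  = ∑ q : Fin 6, ∑ p : Fin 6,
                      ⟪v, b p⟫ * (η (b i) (b p) (b q) * ⟪J (b i), b q⟫) :=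
                fun i => Finset.sum_comm
              calc (∑ i : Fin 6, ∑ p : Fin 6, ∑ q : Fin 6,
                    ⟪v, b p⟫ * (η (b i) (b p) (b q) * ⟪J (b i), b q⟫))
                  = ∑ i : Fin 6, ∑ q : Fin 6, ∑ p : Fin 6,
                      ⟪v, b p⟫ * (η (b i) (b p) (b q) * ⟪J (b i), b q⟫) :=
                    Finset.sum_congr rfl fun i _ => swap i
                _ = ∑ i : Fin 6, ∑ q : Fin 6,
                      η (b i) v (b q) * ⟪J (b i), b q⟫ := by
                    refine Finset.sum_congr rfl fun i _ =>
                      Finset.sum_congr rfl fun q _ => ?_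
                    have e : ∀ p : Fin 6,
                        ⟪v, b p⟫ * (η (b i) (b p) (b q) * ⟪J (b i), b q⟫)
                        = (⟪v, b p⟫ * η (b i) (b p) (b q)) * ⟪J (b i), b q⟫ :=
                      fun p => by ring
                    rw [Finset.sum_congr rfl fun p _ => e p, ← Finset.sum_mul,
                      collapse3b b η v (b i) (b q)]
                _ = ∑ i : Fin 6, ∑ q : Fin 6,
                      -(η v (b i) (b q) * ⟪J (b i), b q⟫) := by
                    refine Finset.sum_congr rfl fun i _ =>
                      Finset.sum_congr rfl fun q _ => ?_
                    rw [hη12 (b i) v (b q)]; ring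
                _ = -(∑ i : Fin 6, ∑ q : Fin 6,
                      η v (b i) (b q) * ⟪J (b i), b q⟫) := by
                    simp only [Finset.sum_neg_distrib]
                _ = 0 := by rw [hηω v, neg_zero]
            have hC : (∑ i : Fin 6, ∑ p : Fin 6, ∑ q : Fin 6,
                ⟪v, b q⟫ * (η (b i) (b p) (b q) * ⟪J (b i), b p⟫)) = 0 := by
              calc (∑ i : Fin 6, ∑ p : Fin 6, ∑ q : Fin 6,
                    ⟪v, b q⟫ * (η (b i) (b p) (b q) * ⟪J (b i), b p⟫))
                  = ∑ i : Fin 6, ∑ p : Fin 6,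
                      η (b i) (b p) v * ⟪J (b i), b p⟫ := by
                    refine Finset.sum_congr rfl fun i _ =>
                      Finset.sum_congr rfl fun p _ => ?_
                    have e : ∀ q : Fin 6,
                        ⟪v, b q⟫ * (η (b i) (b p) (b q) * ⟪J (b i), b p⟫)
                        = (⟪v, b q⟫ * η (b i) (b p) (b q)) * ⟪J (b i), b p⟫ :=
                      fun q => by ring
                    rw [Finset.sum_congr rfl fun q _ => e q, ← Finset.sum_mul,
                      collapse3c b η v (b i) (b p)]
                _ = ∑ i : Fin 6, ∑ p : Fin 6,
                      η v (b i) (b p) * ⟪J (b i), b p⟫ := by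
                    refine Finset.sum_congr rfl fun i _ =>
                      Finset.sum_congr rfl fun p _ => ?_
                    have e1 := hη23 (b i) (b p) v
                    have e2 := hη12 (b i) v (b p)
                    have : η (b i) (b p) v = η v (b i) (b p) := by linarith
                    rw [this]
                _ = 0 := hηω v
            rw [hA, hB, hC]; ring
    simp only [Finset.sum_add_distrib] at h
    linarith
  -- cyclic/permutation facts
  have Dηcyc : ∀ u x y z : V, Dη u x y z = Dη u y z x := by
    intro u x y z
    have e1 := hDη12 u x y z
    have e2 := hDη23 u y x z
    linarith
  have Ω13 : ∀ x y z : V, Ω x y z = -Ω z y x := by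
    intro x y z
    have e1 := hΩ12 x y z
    have e2 := hΩ23 y x z
    have e3 := hΩ12 y z x
    linarith
  have hSb : (∑ i : Fin 6, ∑ p : Fin 6, ∑ q : Fin 6,
      Dη (b p) (b i) v (b q) * Ω (b i) (b p) (b q))
      = ∑ i : Fin 6, ∑ p : Fin 6, ∑ q : Fin 6,
          Dη (b i) v (b p) (b q) * Ω (b i) (b p) (b q) := by
    have swap : (∑ i : Fin 6, ∑ p : Fin 6, ∑ q : Fin 6,
        Dη (b p) (b i) v (b q) * Ω (b i) (b p) (b q))
        = ∑ i : Fin 6, ∑ p : Fin 6, ∑ q : Fin 6,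
            Dη (b i) (b p) v (b q) * Ω (b p) (b i) (b q) := Finset.sum_comm
    rw [swap]
    refine Finset.sum_congr rfl fun i _ => Finset.sum_congr rfl fun p _ =>
      Finset.sum_congr rfl fun q _ => ?_
    rw [hDη12 (b i) (b p) v (b q), hΩ12 (b p) (b i) (b q)]; ring
  have hSc : (∑ i : Fin 6, ∑ p : Fin 6, ∑ q : Fin 6,
      Dη (b q) (b i) v (b p) * Ω (b i) (b p) (b q))
      = -∑ i : Fin 6, ∑ p : Fin 6, ∑ q : Fin 6,
          Dη (b i) v (b p) (b q) * Ω (b i) (b p) (b q) := by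
    have swap := sum_swap13
      (fun i p q => Dη (b q) (b i) v (b p) * Ω (b i) (b p) (b q))
    calc (∑ i : Fin 6, ∑ p : Fin 6, ∑ q : Fin 6,
          Dη (b q) (b i) v (b p) * Ω (b i) (b p) (b q))
        = ∑ q : Fin 6, ∑ p : Fin 6, ∑ i : Fin 6,
            Dη (b q) (b i) v (b p) * Ω (b i) (b p) (b q) := swap
      _ = ∑ i : Fin 6, ∑ p : Fin 6, ∑ q : Fin 6,
            -(Dη (b i) v (b p) (b q) * Ω (b i) (b p) (b q)) := by
          refine Finset.sum_congr rfl fun i _ => Finset.sum_congr rfl fun p _ =>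
            Finset.sum_congr rfl fun q _ => ?_
          rw [Dηcyc (b i) (b q) v (b p), Ω13 (b q) (b p) (b i)]; ring
      _ = -∑ i : Fin 6, ∑ p : Fin 6, ∑ q : Fin 6,
            Dη (b i) v (b p) (b q) * Ω (b i) (b p) (b q) := by
          simp only [Finset.sum_neg_distrib]
  have hS3 : (∑ i : Fin 6, ∑ p : Fin 6, ∑ q : Fin 6,
      Dη (b i) v (b p) (b q) * Ω (b i) (b p) (b q)) = 0 := by
    have hpt : ∀ i p q : Fin 6,
        Dη (b i) v (b p) (b q) * Ω (b i) (b p) (b q)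
        = Dη v (b i) (b p) (b q) * Ω (b i) (b p) (b q)
          - Dη (b p) (b i) v (b q) * Ω (b i) (b p) (b q)
          + Dη (b q) (b i) v (b p) * Ω (b i) (b p) (b q) := by
      intro i p q
      linear_combination Ω (b i) (b p) (b q) * hdη (b i) v (b p) (b q)
    have e : (∑ i : Fin 6, ∑ p : Fin 6, ∑ q : Fin 6,
        Dη (b i) v (b p) (b q) * Ω (b i) (b p) (b q))
        = (∑ i : Fin 6, ∑ p : Fin 6, ∑ q : Fin 6,
            Dη v (b i) (b p) (b q) * Ω (b i) (b p) (b q))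
          - (∑ i : Fin 6, ∑ p : Fin 6, ∑ q : Fin 6,
            Dη (b p) (b i) v (b q) * Ω (b i) (b p) (b q))
          + (∑ i : Fin 6, ∑ p : Fin 6, ∑ q : Fin 6,
            Dη (b q) (b i) v (b p) * Ω (b i) (b p) (b q)) := by
      calc (∑ i : Fin 6, ∑ p : Fin 6, ∑ q : Fin 6,
            Dη (b i) v (b p) (b q) * Ω (b i) (b p) (b q))
          = ∑ i : Fin 6, ∑ p : Fin 6, ∑ q : Fin 6,
              (Dη v (b i) (b p) (b q) * Ω (b i) (b p) (b q)
                - Dη (b p) (b i) v (b q) * Ω (b i) (b p) (b q)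
                + Dη (b q) (b i) v (b p) * Ω (b i) (b p) (b q)) :=
            Finset.sum_congr rfl fun i _ => Finset.sum_congr rfl fun p _ =>
              Finset.sum_congr rfl fun q _ => hpt i p q
        _ = _ := by
            simp only [Finset.sum_add_distrib, Finset.sum_sub_distrib]
    rw [hSa, hSb, hSc] at e
    linarith
  simp only [Finset.sum_add_distrib]
  linarith
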